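/- Let Φ = Σ_{j∈J} a_j log f_j be the master function of a weighted essential affine arrangement 𝒜 in ℂ^k with all weights a_j ≠ 0. Then a point t in the complement U is a critical point of Φ if and only if the special vector v(t) ∈ 𝓕^k(𝒜) is singular, i.e., δ^{(a)} v(t) = 0. -/

import Mathlib

/-- **Critical points of the master function and singular special vectors.**
For the arrangement `H_j = {g_j(t) + z_j = 0}` in `ℂ^{k+1}` (essential: some `k+1` of the
linear parts are independent) with nonzero weights `a_j` and master function
`Φ = Σ_j a_j log(g_j(t)+z_j)`, a point `t` of the complement is a critical point of `Φ`
(i.e. `dΦ|_t = Σ_j (a_j/f_j(t))·g_j = 0`) if and only if the special vector `v(t)` is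
singular, `δ^{(a)} v(t) = 0`.  The special vector is given on the Orlik–Solomon generators by
`⟨(H_{i₀},…,H_{i_k}), v(t)⟩ = det(g_{i_r}(e_s)) / ∏_r f_{i_r}(t)`, and singularity means that
the pairing of `v(t)` with each generator `ν(a)·(H_{j₁},…,H_{j_k})` of `ν(a)·OS^k` vanishes. -/
theorem critical_point_iff_special_vector_singular
    (k n : ℕ)
    (g : Fin n → ((Fin (k+1) → ℂ) →ₗ[ℂ] ℂ)) (z a : Fin n → ℂ)
    (ha : ∀ j, a j ≠ 0) (hg : ∀ j, g j ≠ 0)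
    (hess : ∃ js : Fin (k+1) → Fin n, LinearIndependent ℂ (g ∘ js))
    (t : Fin (k+1) → ℂ) (ht : ∀ j, g j t + z j ≠ 0) :
    (∑ j : Fin n, (a j / (g j t + z j)) • g j = 0) ↔
    (∀ js : Fin k → Fin n, ∑ j : Fin n, a j *
      ((Matrix.of fun i i' : Fin (k+1) =>
          g ((Fin.cons j js : Fin (k+1) → Fin n) i) (Pi.single i' 1)).det /
        ∏ i : Fin (k+1), (g ((Fin.cons j js : Fin (k+1) → Fin n) i) t + z ((Fin.cons j js : Fin (k+1) → Fin n) i))) = 0) := by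
  classical
  -- coordinate map on the dual space
  set φ : ((Fin (k+1) → ℂ) →ₗ[ℂ] ℂ) →ₗ[ℂ] (Fin (k+1) → ℂ) :=
    LinearMap.pi fun i => LinearMap.applyₗ (Pi.single i (1:ℂ)) with hφ
  have hφapp : ∀ u i, φ u i = u (Pi.single i 1) := by
    intro u i; simp [hφ]
  have hφinj : ∀ u, φ u = 0 → u = 0 := by
    intro u hu
    refine LinearMap.ext fun x => ?_
    rw [u.pi_apply_eq_sum_univ x]
    simp only [LinearMap.zero_apply]
    refine Finset.sum_eq_zero fun i _ => ?_
    have : (fun j => if i = j then (1:ℂ) else 0) = Pi.single i 1 := by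
      funext j; simp [Pi.single_apply, eq_comm]
    rw [this, ← hφapp, hu]
    simp
  set L : (Fin (k+1) → ℂ) →ₗ[ℂ] ℂ := ∑ j : Fin n, (a j / (g j t + z j)) • g j with hL
  set row : (Fin k → Fin n) → Fin k → (Fin (k+1) → ℂ) := fun js r => φ (g (js r)) with hrow
  set Dlin : (Fin k → Fin n) → ((Fin (k+1) → ℂ) →ₗ[ℂ] ℂ) := fun js =>
    (Matrix.detRowAlternating).toMultilinearMap.toLinearMap (Fin.cons 0 (row js)) 0 with hDlin
  have hD : ∀ js x, Dlin js x = (Matrix.of (Fin.cons x (row js))).det := by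
    intro js x
    simp only [hDlin, MultilinearMap.toLinearMap_apply, Fin.update_cons_zero]
    rfl
  have hM : ∀ (j : Fin n) (js : Fin k → Fin n),
      (Matrix.of fun i i' : Fin (k+1) =>
        g ((Fin.cons j js : Fin (k+1) → Fin n) i) (Pi.single i' 1))
      = Matrix.of (Fin.cons (φ (g j)) (row js)) := by
    intro j js
    ext i i'
    refine Fin.cases ?_ (fun r => ?_) i <;>
      simp [hrow, hφapp]
  have hsum : ∀ js : Fin k → Fin n,
      (∑ j : Fin n, a j *
        ((Matrix.of fun i i' : Fin (k+1) =>
            g ((Fin.cons j js : Fin (k+1) → Fin n) i) (Pi.single i' 1)).det /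
          ∏ i : Fin (k+1), (g ((Fin.cons j js : Fin (k+1) → Fin n) i) t
            + z ((Fin.cons j js : Fin (k+1) → Fin n) i))))
      = Dlin js (φ L) / ∏ r : Fin k, (g (js r) t + z (js r)) := by
    intro js
    have hφL : φ L = ∑ j : Fin n, (a j / (g j t + z j)) • φ (g j) := by
      rw [hL, map_sum]
      exact Finset.sum_congr rfl fun j _ => (φ.map_smul _ _)
    rw [hφL, map_sum, Finset.sum_div]
    refine Finset.sum_congr rfl fun j _ => ?_
    rw [map_smul, hD, ← hM]
    have hprod : (∏ i : Fin (k+1), (g ((Fin.cons j js : Fin (k+1) → Fin n) i) t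
        + z ((Fin.cons j js : Fin (k+1) → Fin n) i)))
        = (g j t + z j) * ∏ r : Fin k, (g (js r) t + z (js r)) := by
      have : (fun i : Fin (k+1) => g ((Fin.cons j js : Fin (k+1) → Fin n) i) t
          + z ((Fin.cons j js : Fin (k+1) → Fin n) i))
          = Fin.cons (g j t + z j) (fun r => g (js r) t + z (js r)) := by
        funext i
        refine Fin.cases ?_ (fun r => ?_) i <;> simp
      rw [this, Fin.prod_cons]
    rw [hprod]
    have h1 : g j t + z j ≠ 0 := ht j
    have h2 : (∏ r : Fin k, (g (js r) t + z (js r))) ≠ 0 :=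
      Finset.prod_ne_zero_iff.mpr fun r _ => ht (js r)
    field_simp
    rw [smul_eq_mul, ← mul_assoc, mul_div_assoc', mul_comm (g j t + z j) (a j), mul_div_assoc, div_self h1, mul_one]
  have hP : ∀ js : Fin k → Fin n, (∏ r : Fin k, (g (js r) t + z (js r))) ≠ 0 :=
    fun js => Finset.prod_ne_zero_iff.mpr fun r _ => ht (js r)
  constructor
  · intro h0 js
    rw [hsum js, show φ L = 0 by rw [h0]; exact map_zero φ]
    simp
  · intro h
    have h' : ∀ js : Fin k → Fin n, Dlin js (φ L) = 0 := by
      intro js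
      have := h js
      rw [hsum js, div_eq_zero_iff] at this
      exact this.resolve_right (hP js)
    -- use essentialness to build a basis
    obtain ⟨js₀, hind⟩ := hess
    have hkerφ : LinearMap.ker φ = ⊥ :=
      LinearMap.ker_eq_bot'.mpr fun u hu => hφinj u hu
    have hv : LinearIndependent ℂ (fun i : Fin (k+1) => φ (g (js₀ i))) := by
      have := hind.map' φ hkerφ
      exact this
    have hcard : Fintype.card (Fin (k+1)) = Module.finrank ℂ (Fin (k+1) → ℂ) := by
      simp
    let b := basisOfLinearIndependentOfCardEqFinrank hv hcard
    have hb : ∀ i, b i = φ (g (js₀ i)) := fun i => by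
      simp only [b, coe_basisOfLinearIndependentOfCardEqFinrank]
    have hc : ∀ i : Fin (k+1), b.repr (φ L) i = 0 := by
      intro i
      set σ : Fin (k+1) → Fin (k+1) := Fin.cons i i.succAbove with hσdef
      have hσ : Function.Injective σ := by
        intro p q
        induction p using Fin.cases with
        | zero =>
          induction q using Fin.cases with
          | zero => intro _; rfl
          | succ q' =>
            intro hpq
            simp only [hσdef, Fin.cons_zero, Fin.cons_succ] at hpq
            exact absurd hpq.symm (Fin.succAbove_ne i q')
        | succ p' =>
          induction q using Fin.cases with
          | zero =>
            intro hpq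
            simp only [hσdef, Fin.cons_zero, Fin.cons_succ] at hpq
            exact absurd hpq (Fin.succAbove_ne i p')
          | succ q' =>
            intro hpq
            simp only [hσdef, Fin.cons_succ] at hpq
            exact congrArg Fin.succ (Fin.succAbove_right_injective hpq)
      -- v ∘ σ rows
      have hrows : (Fin.cons (φ (g (js₀ i))) (row (fun r => js₀ (i.succAbove r)))
          : Fin (k+1) → (Fin (k+1) → ℂ))
          = (fun p => φ (g (js₀ (σ p)))) := by
        funext p
        refine Fin.cases ?_ (fun r => ?_) p <;> simp [hrow, hσdef]
      have hDvi : Dlin (fun r => js₀ (i.succAbove r)) (φ (g (js₀ i))) ≠ 0 := by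
        rw [hD, hrows]
        have hli : LinearIndependent ℂ (fun p => φ (g (js₀ (σ p)))) := hv.comp σ hσ
        have : IsUnit (Matrix.of (fun p => φ (g (js₀ (σ p))))) := by
          rw [← Matrix.linearIndependent_rows_iff_isUnit]
          exact hli
        exact ((Matrix.isUnit_iff_isUnit_det _).mp this).ne_zero
      have hDvm : ∀ m : Fin (k+1), m ≠ i →
          Dlin (fun r => js₀ (i.succAbove r)) (φ (g (js₀ m))) = 0 := by
        intro m hm
        obtain ⟨r, hr⟩ := Fin.exists_succAbove_eq hm
        rw [hD]
        refine Matrix.det_zero_of_row_eq (i := (0 : Fin (k+1))) (j := r.succ)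
          (Fin.succ_ne_zero r).symm ?_
        show (Fin.cons (φ (g (js₀ m))) (row fun r => js₀ (i.succAbove r))
            : Fin (k+1) → (Fin (k+1) → ℂ)) 0
          = (Fin.cons (φ (g (js₀ m))) (row fun r => js₀ (i.succAbove r))
            : Fin (k+1) → (Fin (k+1) → ℂ)) r.succ
        rw [Fin.cons_zero, Fin.cons_succ, hrow]
        show φ (g (js₀ m)) = φ (g (js₀ (i.succAbove r)))
        rw [hr]
      have hexp : φ L = ∑ m : Fin (k+1), b.repr (φ L) m • φ (g (js₀ m)) := by
        conv_lhs => rw [← b.sum_repr (φ L)]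
        exact Finset.sum_congr rfl fun m _ => by rw [hb]
      have h0 := h' (fun r => js₀ (i.succAbove r))
      rw [hexp, map_sum] at h0
      have : ∑ m : Fin (k+1), b.repr (φ L) m •
          Dlin (fun r => js₀ (i.succAbove r)) (φ (g (js₀ m)))
          = b.repr (φ L) i • Dlin (fun r => js₀ (i.succAbove r)) (φ (g (js₀ i))) := by
        refine Finset.sum_eq_single i (fun m _ hm => ?_) (by intro hnot; simp at hnot)
        rw [hDvm m hm, smul_zero]
      rw [show (∑ m : Fin (k+1), Dlin (fun r => js₀ (i.succAbove r))
          (b.repr (φ L) m • φ (g (js₀ m)))) =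
          ∑ m : Fin (k+1), b.repr (φ L) m •
            Dlin (fun r => js₀ (i.succAbove r)) (φ (g (js₀ m))) from
        Finset.sum_congr rfl fun m _ => map_smul _ _ _, this] at h0
      exact (smul_eq_zero.mp h0).resolve_right hDvi
    have hφL0 : φ L = 0 := by
      have : b.repr (φ L) = 0 := by ext i; exact hc i
      have := congrArg b.repr.symm this
      simpa using this
    exact hφinj L hφL0
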